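/- Let F₁,…,F_s : ℝⁿ → ℝ be continuously differentiable functions and suppose every point of the zero set Z := {F_{j₁} = 0, …, F_{j_k} = 0} ⊆ ℝⁿ is a point where (F_{j₁},…,F_{j_k}) is a submersion, and suppose moreover that Z ∩ closure({F₁ > 0, …, F_s > 0}) ∩ {F_j = 0} = ∅ for every index j ∉ {j₁,…,j_k} (maximality of the index set). Then Z ∩ closure({F₁ > 0, …, F_s > 0}) = Z ∩ {F_j > 0 for all j ∉ {j₁,…,j_k}}. -/

import Mathlib

open Set Filter Topology

/-- If `f 0 = 0` and `f` has positive derivative at `0`, then `f t > 0` for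
`t` in a right neighborhood of `0`. -/
lemma eventually_pos_of_hasDerivAt {f : ℝ → ℝ} {c : ℝ}
    (hf : HasDerivAt f c 0) (h0 : f 0 = 0) (hc : 0 < c) :
    ∀ᶠ t in 𝓝[>] (0:ℝ), 0 < f t := by
  have hslope : Tendsto (slope f 0) (𝓝[≠] (0:ℝ)) (𝓝 c) :=
    hasDerivAt_iff_tendsto_slope.1 hf
  have h1 : ∀ᶠ t in 𝓝[≠] (0:ℝ), 0 < slope f 0 t :=
    hslope.eventually (eventually_gt_nhds hc)
  have h2 : ∀ᶠ t in 𝓝[>] (0:ℝ), 0 < slope f 0 t :=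
    h1.filter_mono (nhdsWithin_mono _ (fun t ht => ne_of_gt ht))
  filter_upwards [h2, self_mem_nhdsWithin] with t ht ht'
  have : slope f 0 t = f t / t := by simp [slope, h0, div_eq_inv_mul]
  rw [this] at ht
  have := mul_pos ht (ht' : (0:ℝ) < t)
  rwa [div_mul_cancel₀ _ (ne_of_gt ht')] at this

theorem closure_strict_ineq_description (n s k : ℕ)
    (F : Fin s → EuclideanSpace ℝ (Fin n) → ℝ)
    (hF : ∀ j, ContDiff ℝ 1 (F j))
    (J : Fin k → Fin s) (hJ : StrictMono J)
    (Z : Set (EuclideanSpace ℝ (Fin n)))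
    (hZ : Z = {x | ∀ l, F (J l) x = 0})
    (hsubm : ∀ x ∈ Z, Function.Surjective
      (fderiv ℝ (fun y => (WithLp.toLp 2 (fun l => F (J l) y) : EuclideanSpace ℝ (Fin k))) x))
    (hmax : ∀ j, j ∉ Set.range J →
      Z ∩ closure {x | ∀ i, F i x > 0} ∩ {x | F j x = 0} = ∅) :
    Z ∩ closure {x | ∀ i, F i x > 0} =
      Z ∩ {x | ∀ j, j ∉ Set.range J → F j x > 0} := by
  ext x
  constructor
  · rintro ⟨hxZ, hxcl⟩
    refine ⟨hxZ, fun j hj => ?_⟩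
    have hle : 0 ≤ F j x := by
      have hsub : closure {x | ∀ i, F i x > 0} ⊆ {x | 0 ≤ F j x} := by
        apply closure_minimal
        · intro y hy; exact le_of_lt (hy j)
        · exact isClosed_le continuous_const ((hF j).continuous)
      exact hsub hxcl
    rcases lt_or_eq_of_le hle with h | h
    · exact h
    · exact absurd ⟨⟨hxZ, hxcl⟩, h.symm⟩
        ((Set.eq_empty_iff_forall_notMem.1 (hmax j hj)) x)
  · rintro ⟨hxZ, hxpos⟩
    refine ⟨hxZ, ?_⟩
    -- get direction v with derivative 1 in each constraint
    set g : EuclideanSpace ℝ (Fin n) → (Fin k → ℝ) :=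
      fun y => (fun l => F (J l) y) with hg
    have hgdiff : DifferentiableAt ℝ g x := by
      refine differentiableAt_pi.2 fun l => ?_
      exact ((hF (J l)).differentiable one_ne_zero) x
    obtain ⟨v, hv⟩ := hsubm x hxZ (WithLp.toLp 2 (fun _ => (1:ℝ)))
    -- component derivatives
    have hcomp : ∀ l, HasDerivAt (fun t : ℝ => F (J l) (x + t • v)) 1 0 := by
      intro l
      have h1 : HasFDerivAt g (fderiv ℝ g x) x := hgdiff.hasFDerivAt
      have h2 : HasFDerivAt (F (J l))
          ((ContinuousLinearMap.proj (R := ℝ) (φ := fun _ : Fin k => ℝ) l).comp (fderiv ℝ g x)) x := by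
        have := (ContinuousLinearMap.proj (R := ℝ) (φ := fun _ : Fin k => ℝ) l).hasFDerivAt.comp x h1
        exact this
      have hline : HasDerivAt (fun t : ℝ => x + t • v) v 0 := by
        simpa using ((hasDerivAt_id (0:ℝ)).smul_const v).const_add x
      have h2' : HasFDerivAt (F (J l))
          ((ContinuousLinearMap.proj (R := ℝ) (φ := fun _ : Fin k => ℝ) l).comp (fderiv ℝ g x)) (x + (0:ℝ) • v) := by
        simpa using h2
      have := h2'.comp_hasDerivAt 0 hline
      simp only [zero_smul, add_zero] at this
      have hfd : fderiv ℝ g x v = fun _ => (1:ℝ) := by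
        have h := congrArg WithLp.ofLp hv
        have he : (fun y => (WithLp.toLp 2 (fun l => F (J l) y) : EuclideanSpace ℝ (Fin k))) =
            (PiLp.continuousLinearEquiv 2 ℝ (fun _ : Fin k => ℝ)).symm ∘ g := rfl
        rw [he, ContinuousLinearEquiv.comp_fderiv] at h
        simpa using h
      have hval : ((ContinuousLinearMap.proj (R := ℝ) (φ := fun _ : Fin k => ℝ) l).comp (fderiv ℝ g x)) v = 1 := by
        rw [ContinuousLinearMap.comp_apply, hfd]; rfl
      rwa [hval] at this
    have hx0 : ∀ l, F (J l) x = 0 := by rw [hZ] at hxZ; exact hxZ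
    -- F (J l) positive along the ray
    have hJpos : ∀ l, ∀ᶠ t in 𝓝[>] (0:ℝ), 0 < F (J l) (x + t • v) := by
      intro l
      exact eventually_pos_of_hasDerivAt (hcomp l) (by simp [hx0 l]) one_pos
    -- other constraints positive by continuity
    have hOpos : ∀ j, j ∉ Set.range J → ∀ᶠ t in 𝓝[>] (0:ℝ), 0 < F j (x + t • v) := by
      intro j hj
      have hcont : ContinuousAt (fun t : ℝ => F j (x + t • v)) 0 :=
        ((hF j).continuous.comp
          (continuous_const.add (continuous_id.smul continuous_const))).continuousAt
      have : ∀ᶠ t in 𝓝 (0:ℝ), 0 < F j (x + t • v) := by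
        have h0 : (0:ℝ) < F j (x + (0:ℝ) • v) := by simpa using hxpos j hj
        exact hcont.eventually (eventually_gt_nhds h0)
      exact this.filter_mono nhdsWithin_le_nhds
    have hall : ∀ᶠ t in 𝓝[>] (0:ℝ), (x + t • v) ∈ {x | ∀ i, F i x > 0} := by
      have hfin : ∀ᶠ t in 𝓝[>] (0:ℝ), ∀ i : Fin s, 0 < F i (x + t • v) := by
        rw [eventually_all]
        intro i
        by_cases hi : i ∈ Set.range J
        · obtain ⟨l, rfl⟩ := hi; exact hJpos l
        · exact hOpos i hi
      exact hfin
    have htend : Tendsto (fun t : ℝ => x + t • v) (𝓝[>] (0:ℝ)) (𝓝 x) := by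
      have hc : Continuous fun t : ℝ => x + t • v :=
        continuous_const.add (continuous_id.smul continuous_const)
      have : Tendsto (fun t : ℝ => x + t • v) (𝓝 (0:ℝ)) (𝓝 x) := by
        simpa using hc.tendsto (0:ℝ)
      exact this.mono_left nhdsWithin_le_nhds
    exact mem_closure_of_tendsto htend hall
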